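/- Let $N$ be a Nijenhuis operator on a left-symmetric conformal algebra $A$. Then the product $a \cdot^N_\lambda b = N(a)_\lambda b + a_\lambda N(b) - N(a_\lambda b)$ makes $A$ into a left-symmetric conformal algebra, and $N$ is a homomorphism of left-symmetric conformal algebras from $(A, \cdot^N)$ to $(A, \cdot)$. -/
import Mathlib


/- Encoding conventions.
A `ℂ[∂]`-module is encoded as a complex vector space `A` together with an
endomorphism `D : Module.End ℂ A` (the action of `∂`).
A polynomial `Σ cₙ λⁿ ∈ A[λ]` is encoded by its coefficient family `ℕ →₀ A`,
and `ev l p` is its evaluation at `λ = l`.  Since `ℂ` is infinite, a polynomial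
identity in the formal variables `λ, μ, …` is equivalent to the corresponding
family of identities for all complex values of the variables, which is how all
axioms are stated below.
A `λ`-product `a ⊗ b ↦ a_λ b ∈ A[λ]` is encoded as `mul : A → A → (ℕ →₀ A)`
(the coefficients of `a_λ b`), its evaluation at `λ = l` being `ev l (mul a b)`.
`substNeg D p` is the result of substituting the variable of `p` by `-∂-λ`:
it is again a polynomial in `λ` with coefficients `ℕ →₀ A`, so that
`b_{-∂-λ} a` is encoded as `substNeg D (mul b a)` (as a polynomial in `λ`). -/

namespace LSCpaper

open Finsupp

variable {A M V : Type*} [AddCommGroup A] [Module ℂ A] [AddCommGroup M] [Module ℂ M]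
  [AddCommGroup V] [Module ℂ V]

/-- Evaluation of a polynomial with coefficients in `V` at a complex number. -/
noncomputable def ev (l : ℂ) (p : ℕ →₀ V) : V := p.sum fun n c => l ^ n • c

/-- Substitution of `-∂ - λ` for the variable of `p`; the result is the
coefficient family (in `λ`) of the resulting polynomial. -/
noncomputable def substNeg (D : Module.End ℂ A) (p : ℕ →₀ A) : ℕ →₀ A :=
  p.sum fun i c => ∑ k ∈ Finset.range (i + 1),
    Finsupp.single k ((((-1 : ℂ) ^ k * (i.choose k : ℂ))) • ((-D) ^ (i - k)) c)

/-- `ℂ`-bilinearity of a `λ`-product. -/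
def Bilin (f : A → M → ℕ →₀ V) : Prop :=
  (∀ a a' b, f (a + a') b = f a b + f a' b) ∧
  (∀ (r : ℂ) (a : A) (b : M), f (r • a) b = r • f a b) ∧
  (∀ a b b', f a (b + b') = f a b + f a b') ∧
  (∀ (r : ℂ) (a : A) (b : M), f a (r • b) = r • f a b)

/-- `A` with `∂`-action `D` and `λ`-product `mul` is a left-symmetric conformal
algebra. -/
structure IsLSC (D : Module.End ℂ A) (mul : A → A → ℕ →₀ A) : Prop where
  bilin : Bilin mul
  sesq1 : ∀ (l : ℂ) (a b : A), ev l (mul (D a) b) = (-l) • ev l (mul a b)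
  sesq2 : ∀ (l : ℂ) (a b : A), ev l (mul a (D b)) = D (ev l (mul a b)) + l • ev l (mul a b)
  lsym : ∀ (l m : ℂ) (a b c : A),
    ev (l + m) (mul (ev l (mul a b)) c) - ev l (mul a (ev m (mul b c))) =
      ev (l + m) (mul (ev m (mul b a)) c) - ev m (mul b (ev l (mul a c)))

/-- `A` with `∂`-action `D` and `λ`-bracket `br` is a Lie conformal algebra. -/
structure IsLieConf (D : Module.End ℂ A) (br : A → A → ℕ →₀ A) : Prop where
  bilin : Bilin br
  sesq1 : ∀ (l : ℂ) (a b : A), ev l (br (D a) b) = (-l) • ev l (br a b)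
  sesq2 : ∀ (l : ℂ) (a b : A), ev l (br a (D b)) = D (ev l (br a b)) + l • ev l (br a b)
  skew : ∀ (l : ℂ) (a b : A), ev l (br a b) = - ev l (substNeg D (br b a))
  jacobi : ∀ (l m : ℂ) (a b c : A),
    ev l (br a (ev m (br b c))) =
      ev (l + m) (br (ev l (br a b)) c) + ev m (br b (ev l (br a c)))

/-- The evaluated bracket `[a_λ b] = a_λ b - b_{-∂-λ} a` of the sub-adjacent
Lie conformal algebra. -/
noncomputable def brEv (D : Module.End ℂ A) (mul : A → A → ℕ →₀ A) (l : ℂ) (a b : A) : A :=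
  ev l (mul a b) - ev l (substNeg D (mul b a))

end LSCpaper

namespace LSCpaper

variable {A : Type*} [AddCommGroup A] [Module ℂ A]

/-- The deformed product `a ·^N_λ b = N(a)_λ b + a_λ N(b) - N(a_λ b)`
associated with a `ℂ[∂]`-module endomorphism `N`. -/
noncomputable def mulN (D : Module.End ℂ A) (N : A →ₗ[ℂ] A)
    (mul : A → A → ℕ →₀ A) (a b : A) : ℕ →₀ A :=
  mul (N a) b + mul a (N b) - Finsupp.mapRange (⇑N) (map_zero N) (mul a b)

/-- `N` is a Nijenhuis operator on the left-symmetric conformal algebra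
`(A, D, mul)`: `N(a)_λ N(b) = N(a ·^N_λ b)`. -/
def IsNijenhuis (D : Module.End ℂ A) (N : A →ₗ[ℂ] A) (mul : A → A → ℕ →₀ A) : Prop :=
  ∀ (l : ℂ) (a b : A), ev l (mul (N a) (N b)) = N (ev l (mulN D N mul a b))

end LSCpaper

namespace LSCpaper

section EvLemmas

variable {A V : Type*} [AddCommGroup A] [Module ℂ A] [AddCommGroup V] [Module ℂ V]

lemma ev_add (l : ℂ) (p q : ℕ →₀ V) : ev l (p + q) = ev l p + ev l q :=
  Finsupp.sum_add_index' (fun _ => smul_zero _) (fun _ _ _ => smul_add _ _ _)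

lemma ev_smul (l : ℂ) (r : ℂ) (p : ℕ →₀ V) : ev l (r • p) = r • ev l p := by
  rw [ev, Finsupp.sum_smul_index' (fun i => smul_zero _), ev, Finsupp.smul_sum]
  exact Finsupp.sum_congr fun n _ => (smul_comm _ _ _)

lemma ev_neg (l : ℂ) (p : ℕ →₀ V) : ev l (-p) = - ev l p := by
  rw [← neg_one_smul ℂ p, ev_smul, neg_one_smul]

lemma ev_sub (l : ℂ) (p q : ℕ →₀ V) : ev l (p - q) = ev l p - ev l q := by
  rw [sub_eq_add_neg, ev_add, ev_neg, sub_eq_add_neg]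

lemma ev_mapRange (l : ℂ) (N : A →ₗ[ℂ] A) (p : ℕ →₀ A) :
    ev l (Finsupp.mapRange (⇑N) (map_zero N) p) = N (ev l p) := by
  rw [ev, Finsupp.sum_mapRange_index (fun n => smul_zero _), ev, map_finsuppSum]
  exact Finsupp.sum_congr fun n _ => (map_smul N _ _).symm

lemma ev_mulN (D : Module.End ℂ A) (N : A →ₗ[ℂ] A) (mul : A → A → ℕ →₀ A) (l : ℂ) (a b : A) :
    ev l (mulN D N mul a b) =
      ev l (mul (N a) b) + ev l (mul a (N b)) - N (ev l (mul a b)) := by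
  rw [mulN, ev_sub, ev_add, ev_mapRange]

end EvLemmas

/-- Let `N` be a Nijenhuis operator on a left-symmetric
conformal algebra `A`.  Then `a ·^N_λ b = N(a)_λ b + a_λ N(b) - N(a_λ b)`
makes `A` into a left-symmetric conformal algebra, and `N` is a homomorphism
of left-symmetric conformal algebras from `(A, ·^N)` to `(A, ·)`. -/
theorem nijenhuis_product {A : Type*} [AddCommGroup A] [Module ℂ A]
    (D : Module.End ℂ A) (N : A →ₗ[ℂ] A) (mul : A → A → ℕ →₀ A)
    (hA : IsLSC D mul) (hND : ∀ a, N (D a) = D (N a))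
    (hN : IsNijenhuis D N mul) :
    IsLSC D (mulN D N mul) ∧
      ∀ (l : ℂ) (a b : A), N (ev l (mulN D N mul a b)) = ev l (mul (N a) (N b)) := by
  obtain ⟨⟨b1, b2, b3, b4⟩, s1, s2, ls⟩ := hA
  have hN' : ∀ (l : ℂ) (a b : A),
      ev l (mul (N a) (N b)) = N (ev l (mulN D N mul a b)) := hN
  have mrAdd : ∀ p q : ℕ →₀ A, Finsupp.mapRange (⇑N) (map_zero N) (p + q) =
      Finsupp.mapRange (⇑N) (map_zero N) p + Finsupp.mapRange (⇑N) (map_zero N) q :=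
    fun p q => Finsupp.mapRange_add (map_add N) p q
  have mrSmul : ∀ (r : ℂ) (p : ℕ →₀ A), Finsupp.mapRange (⇑N) (map_zero N) (r • p) =
      r • Finsupp.mapRange (⇑N) (map_zero N) p := by
    intro r p; ext n; simp [Finsupp.mapRange_apply]
  have sub1 : ∀ (x y z : A), mul (x - y) z = mul x z - mul y z := by
    intro x y z
    rw [sub_eq_add_neg, b1, ← neg_one_smul ℂ y, b2, neg_one_smul, sub_eq_add_neg]
  have sub2 : ∀ (x y z : A), mul x (y - z) = mul x y - mul x z := by
    intro x y z
    rw [sub_eq_add_neg, b3, ← neg_one_smul ℂ z, b4, neg_one_smul, sub_eq_add_neg]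
  refine ⟨⟨⟨?_, ?_, ?_, ?_⟩, ?_, ?_, ?_⟩, fun l a b => (hN l a b).symm⟩
  · intro a a' b
    simp only [mulN, map_add, b1, b3, mrAdd]
    abel
  · intro r a b
    simp only [mulN, map_smul, b2, b4, mrSmul, smul_add, smul_sub]
  · intro a b b'
    simp only [mulN, map_add, b1, b3, mrAdd]
    abel
  · intro r a b
    simp only [mulN, map_smul, b2, b4, mrSmul, smul_add, smul_sub]
  · intro l a b
    simp only [ev_mulN, hND, s1, map_smul, smul_add, smul_sub]
  · intro l a b
    simp only [ev_mulN, hND, s2, map_add, map_sub, map_smul, smul_add, smul_sub]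
    abel
  · intro l m a b c
    have key : ∀ (l m : ℂ) (a b c : A),
        ev (l + m) (mulN D N mul (ev l (mulN D N mul a b)) c) -
            ev l (mulN D N mul a (ev m (mulN D N mul b c))) =
          (ev (l + m) (mul (ev l (mul (N a) (N b))) c) -
              ev l (mul (N a) (ev m (mul (N b) c)))) +
          (ev (l + m) (mul (ev l (mul (N a) b)) (N c)) -
              ev l (mul (N a) (ev m (mul b (N c))))) +
          (ev (l + m) (mul (ev l (mul a (N b))) (N c)) -
              ev l (mul a (ev m (mul (N b) (N c))))) -
          N (ev (l + m) (mul (ev l (mul (N a) b)) c) -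
              ev l (mul (N a) (ev m (mul b c)))) -
          N (ev (l + m) (mul (ev l (mul a (N b))) c) -
              ev l (mul a (ev m (mul (N b) c)))) -
          N (ev (l + m) (mul (ev l (mul a b)) (N c)) -
              ev l (mul a (ev m (mul b (N c))))) +
          N (N (ev (l + m) (mul (ev l (mul a b)) c) -
              ev l (mul a (ev m (mul b c))))) := by
      intro l m a b c
      simp only [ev_mulN, hN', b1, b3, sub1, sub2, ev_add, ev_sub, map_add, map_sub]
      abel
    rw [key l m a b c,
      ls l m (N a) (N b) c, ls l m (N a) b (N c), ls l m a (N b) (N c),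
      ls l m (N a) b c, ls l m a (N b) c, ls l m a b (N c), ls l m a b c,
      add_comm l m, key m l b a c]
    abel

end LSCpaper
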